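/- For the reduced Veselova system q̇ = (det A/(q,Aq))[A⁻¹p − (p,A⁻¹q)q], ṗ = −Λq with Λ = det A[(p,A⁻¹p) − (p,q)(q,A⁻¹p)]/(q,Aq), restricted to {(q,q)=1, (q,p)=0}, the Hamiltonian-like function Ĥ = (1/2) det A (p, A⁻¹p)/(q, Aq) is a first integral. -/

import Mathlib

open Matrix

private lemma dot_deriv {n : ℕ} {u v : ℝ → Fin n → ℝ} {u' v' : Fin n → ℝ} {t : ℝ}
    (hu : HasDerivAt u u' t) (hv : HasDerivAt v v' t) :
    HasDerivAt (fun s => u s ⬝ᵥ v s) (u' ⬝ᵥ v t + u t ⬝ᵥ v') t := by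
  have h := fun i => ((hasDerivAt_pi.mp hu i).mul (hasDerivAt_pi.mp hv i))
  have h2 : HasDerivAt (fun s => ∑ i : Fin n, u s i * v s i)
      (∑ i : Fin n, (u' i * v t i + u t i * v' i)) t :=
    HasDerivAt.fun_sum fun i _ => h i
  convert h2 using 1
  all_goals simp [dotProduct, Finset.sum_add_distrib]

private lemma mulVec_deriv {n : ℕ} (M : Matrix (Fin n) (Fin n) ℝ) {u : ℝ → Fin n → ℝ}
    {u' : Fin n → ℝ} {t : ℝ} (hu : HasDerivAt u u' t) :
    HasDerivAt (fun s => M.mulVec (u s)) (M.mulVec u') t := by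
  rw [hasDerivAt_pi]
  intro i
  simp only [Matrix.mulVec, dotProduct]
  exact HasDerivAt.fun_sum fun j _ => (hasDerivAt_pi.mp hu j).const_mul (M i j)

theorem veselova_energy_integral (n : ℕ) (a : Fin n → ℝ) (ha : ∀ i, 0 < a i)
    (A : Matrix (Fin n) (Fin n) ℝ) (hA : A = Matrix.diagonal a)
    (q p : ℝ → Fin n → ℝ)
    (Lam : ℝ → ℝ)
    (hLam : ∀ t, Lam t = A.det *
      ((p t ⬝ᵥ A⁻¹.mulVec (p t)) - (p t ⬝ᵥ q t) * (q t ⬝ᵥ A⁻¹.mulVec (p t))) /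
        (q t ⬝ᵥ A.mulVec (q t)))
    (hq : ∀ t, HasDerivAt q
      ((A.det / (q t ⬝ᵥ A.mulVec (q t))) •
        (A⁻¹.mulVec (p t) - (p t ⬝ᵥ A⁻¹.mulVec (q t)) • q t)) t)
    (hp : ∀ t, HasDerivAt p (-(Lam t) • q t) t)
    (hcon1 : ∀ t, q t ⬝ᵥ q t = 1) (hcon2 : ∀ t, q t ⬝ᵥ p t = 0) (t : ℝ) :
    HasDerivAt (fun s => (1/2) * A.det * (p s ⬝ᵥ A⁻¹.mulVec (p s)) /
      (q s ⬝ᵥ A.mulVec (q s))) 0 t := by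
  have ha' : ∀ i, a i ≠ 0 := fun i => (ha i).ne'
  have hAinv : A⁻¹ = Matrix.diagonal (fun i => (a i)⁻¹) := by
    apply Matrix.inv_eq_right_inv
    have hfun : (fun i => a i * (a i)⁻¹) = (1 : Fin n → ℝ) :=
      funext fun i => mul_inv_cancel₀ (ha' i)
    rw [hA, Matrix.diagonal_mul_diagonal, hfun]
    exact Matrix.diagonal_one
  have hsymmA : ∀ x y : Fin n → ℝ, x ⬝ᵥ A.mulVec y = y ⬝ᵥ A.mulVec x := by
    intro x y
    simp only [hA, dotProduct, Matrix.mulVec_diagonal]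
    exact Finset.sum_congr rfl fun i _ => by ring
  have hsymmAi : ∀ x y : Fin n → ℝ, x ⬝ᵥ A⁻¹.mulVec y = y ⬝ᵥ A⁻¹.mulVec x := by
    intro x y
    simp only [hAinv, dotProduct, Matrix.mulVec_diagonal]
    exact Finset.sum_congr rfl fun i _ => by ring
  have hcancel : ∀ x : Fin n → ℝ, A.mulVec (A⁻¹.mulVec x) = x := by
    intro x
    funext i
    rw [hAinv, hA]
    simp only [Matrix.mulVec_diagonal]
    rw [← mul_assoc, mul_inv_cancel₀ (ha' i), one_mul]
  have hgpos : ∀ s, 0 < q s ⬝ᵥ A.mulVec (q s) := by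
    intro s
    have h1 : (0:ℝ) < q s ⬝ᵥ q s := by rw [hcon1 s]; norm_num
    have h2 : ∃ i, q s i ≠ 0 := by
      by_contra h
      push_neg at h
      simp [dotProduct, h] at h1
    obtain ⟨i, hi⟩ := h2
    simp only [hA, dotProduct, Matrix.mulVec_diagonal]
    apply Finset.sum_pos'
    · intro j _
      have h3 : 0 ≤ a j * q s j ^ 2 := mul_nonneg (ha j).le (sq_nonneg _)
      nlinarith
    · refine ⟨i, Finset.mem_univ i, ?_⟩
      have h4 : 0 < q s i ^ 2 := lt_of_le_of_ne (sq_nonneg _) (Ne.symm (pow_ne_zero 2 hi))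
      have h3 : 0 < a i * q s i ^ 2 := mul_pos (ha i) h4
      nlinarith
  have hgne : (q t ⬝ᵥ A.mulVec (q t)) ≠ 0 := (hgpos t).ne'
  have hp' := hp t
  have hq' := hq t
  have hfd := dot_deriv hp' (mulVec_deriv A⁻¹ hp')
  have hgd := dot_deriv hq' (mulVec_deriv A hq')
  -- simplify the derivative of f = p ⬝ᵥ A⁻¹ p
  have hf'val : (-(Lam t) • q t) ⬝ᵥ A⁻¹.mulVec (p t) + p t ⬝ᵥ A⁻¹.mulVec (-(Lam t) • q t)
      = -2 * Lam t * (q t ⬝ᵥ A⁻¹.mulVec (p t)) := by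
    rw [Matrix.mulVec_smul, smul_dotProduct, dotProduct_smul, hsymmAi (p t) (q t)]
    simp only [smul_eq_mul]; ring
  rw [hf'val] at hfd
  -- simplify the derivative of g = q ⬝ᵥ A q
  have hg'val : ((A.det / (q t ⬝ᵥ A.mulVec (q t))) •
        (A⁻¹.mulVec (p t) - (p t ⬝ᵥ A⁻¹.mulVec (q t)) • q t)) ⬝ᵥ A.mulVec (q t)
      + q t ⬝ᵥ A.mulVec ((A.det / (q t ⬝ᵥ A.mulVec (q t))) •
        (A⁻¹.mulVec (p t) - (p t ⬝ᵥ A⁻¹.mulVec (q t)) • q t))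
      = -2 * A.det * (q t ⬝ᵥ A⁻¹.mulVec (p t)) := by
    rw [hsymmA _ (q t), Matrix.mulVec_smul, dotProduct_smul, Matrix.mulVec_sub,
      dotProduct_sub, hcancel, Matrix.mulVec_smul, dotProduct_smul, hcon2 t,
      hsymmAi (p t) (q t)]
    simp only [smul_eq_mul]
    field_simp
    ring
  rw [hg'val] at hgd
  have key := (hfd.const_mul ((1:ℝ)/2 * A.det)).div hgd hgne
  convert key using 1
  · rfl
  · rfl
  · rfl
  rw [hLam t, dotProduct_comm (p t) (q t), hcon2 t]
  field_simp
  ring
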